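/- Under alternative strong parallel trends (Alt-SPT), the average treatment effect equals the average treatment effect on the treated at every dose: ATE(d) = ATT(d|d) for all d ∈ 𝒟. -/

import Mathlib

open MeasureTheory

/-- Conditional expectation of `X` given the event `A`: `E[X | A] = E[X·1_A] / P(A)`. -/
noncomputable def cExp {Ω : Type*} [MeasurableSpace Ω] (P : Measure Ω)
    (X : Ω → ℝ) (A : Set Ω) : ℝ :=
  (∫ ω in A, X ω ∂P) / (P A).toReal

lemma cExp_sub {Ω : Type*} [MeasurableSpace Ω] (P : Measure Ω)
    (f g : Ω → ℝ) (A : Set Ω) (hf : Integrable f P) (hg : Integrable g P) :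
    cExp P (fun ω => f ω - g ω) A = cExp P f A - cExp P g A := by
  unfold cExp
  rw [integral_sub hf.integrableOn hg.integrableOn, sub_div]

/-- Under alternative strong parallel trends
(`E[Y1 (d j) − Y0 | D = d l] = E[Y1 (d j) − Y0 | D = d j]` for all doses `d j, d l`),
the ATE equals the ATT at every dose: `ATE(d j) = ATT(d j | d j)`. -/
theorem ate_eq_att_under_alt_strong_parallel_trends
    {Ω : Type*} [MeasurableSpace Ω] (P : Measure Ω) [IsProbabilityMeasure P]
    (J : ℕ) (d : ℕ → ℝ) (hd0 : d 0 = 0)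
    (hmono : ∀ i j : ℕ, i < j → j ≤ J → d i < d j)
    (D : Ω → ℝ) (hD : Measurable D)
    (hDval : ∀ ω, ∃ j ≤ J, D ω = d j)
    (hp : ∀ j ≤ J, 0 < P {ω | D ω = d j})
    (Y0 : Ω → ℝ) (hY0m : Measurable Y0) (hY0i : Integrable Y0 P)
    (Y1 : ℝ → Ω → ℝ)
    (hY1m : ∀ j ≤ J, Measurable (Y1 (d j)))
    (hY1i : ∀ j ≤ J, Integrable (Y1 (d j)) P)
    (hAltSPT : ∀ j ≤ J, ∀ l ≤ J,
      cExp P (fun ω => Y1 (d j) ω - Y0 ω) {ω | D ω = d l} =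
        cExp P (fun ω => Y1 (d j) ω - Y0 ω) {ω | D ω = d j}) :
    ∀ j ≤ J,
      (∫ ω, (Y1 (d j) ω - Y1 (d 0) ω) ∂P) =
        cExp P (fun ω => Y1 (d j) ω - Y1 (d 0) ω) {ω | D ω = d j} := by
  intro j hj
  set A : ℕ → Set Ω := fun l => {ω | D ω = d l} with hA
  have hAm : ∀ l, MeasurableSet (A l) := fun l => hD (measurableSet_singleton _)
  have hdinj : ∀ l ≤ J, ∀ l' ≤ J, l ≠ l' → d l ≠ d l' := by
    intro l hl l' hl' hne
    rcases lt_or_gt_of_ne hne with h | h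
    · exact ne_of_lt (hmono l l' h hl')
    · exact ne_of_gt (hmono l' l h hl)
  have hdisj : (↑(Finset.range (J + 1)) : Set ℕ).Pairwise (Function.onFun Disjoint A) := by
    intro l hl l' hl' hne
    simp only [Finset.coe_range, Set.mem_Iio, Nat.lt_succ_iff] at hl hl'
    apply Set.disjoint_left.mpr
    intro ω h1 h2
    exact hdinj l hl l' hl' hne (h1.symm.trans h2)
  have hUnion : ⋃ l ∈ Finset.range (J + 1), A l = Set.univ := by
    apply Set.eq_univ_of_forall
    intro ω
    obtain ⟨l, hl, hω⟩ := hDval ω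
    exact Set.mem_biUnion (Finset.mem_range.mpr (Nat.lt_succ_of_le hl)) hω
  have hsplit : ∀ (f : Ω → ℝ), Integrable f P →
      ∫ ω, f ω ∂P = ∑ l ∈ Finset.range (J + 1), ∫ ω in A l, f ω ∂P := by
    intro f hf
    rw [← setIntegral_univ, ← hUnion,
      integral_biUnion_finset _ (fun i _ => hAm i) hdisj (fun i _ => hf.integrableOn)]
  set X : Ω → ℝ := fun ω => Y1 (d j) ω - Y1 (d 0) ω with hX
  have hXint : Integrable X P := (hY1i j hj).sub (hY1i 0 (Nat.zero_le J))
  have hXeq : X = fun ω => (Y1 (d j) ω - Y0 ω) - (Y1 (d 0) ω - Y0 ω) := by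
    funext ω; show Y1 (d j) ω - Y1 (d 0) ω = _; ring
  have hsub : ∀ B : Set Ω,
      cExp P (fun ω => Y1 (d j) ω - Y0 ω - (Y1 (d 0) ω - Y0 ω)) B =
        cExp P (fun ω => Y1 (d j) ω - Y0 ω) B - cExp P (fun ω => Y1 (d 0) ω - Y0 ω) B :=
    fun B => cExp_sub P (fun ω => Y1 (d j) ω - Y0 ω) (fun ω => Y1 (d 0) ω - Y0 ω) B
      ((hY1i j hj).sub hY0i) ((hY1i 0 (Nat.zero_le J)).sub hY0i)
  have hXconst : ∀ l ≤ J, cExp P X (A l) = cExp P X (A j) := by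
    intro l hl
    rw [hXeq, hsub, hsub,
      hAltSPT j hj l hl, hAltSPT 0 (Nat.zero_le J) l hl, hAltSPT 0 (Nat.zero_le J) j hj]
  have hPAne : ∀ l ≤ J, (P (A l)).toReal ≠ 0 := by
    intro l hl
    exact ENNReal.toReal_ne_zero.mpr ⟨(hp l hl).ne', measure_ne_top P _⟩
  have hseg : ∀ l ≤ J, ∫ ω in A l, X ω ∂P = (P (A l)).toReal * cExp P X (A j) := by
    intro l hl
    rw [← hXconst l hl]
    unfold cExp
    rw [mul_comm, div_mul_cancel₀ _ (hPAne l hl)]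
  have hsum1 : ∑ l ∈ Finset.range (J + 1), (P (A l)).toReal = 1 := by
    have := hsplit (fun _ => (1 : ℝ)) (integrable_const 1)
    simp only [setIntegral_const, smul_eq_mul, mul_one, integral_const,
      measureReal_def, Measure.restrict_apply_univ, measure_univ, ENNReal.toReal_one, one_smul] at this
    exact this.symm
  rw [hsplit X hXint,
    Finset.sum_congr rfl (fun l hl => hseg l (Nat.lt_succ_iff.mp (Finset.mem_range.mp hl))),
    ← Finset.sum_mul, hsum1, one_mul]
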